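/- Define a_k = ∫ over the simplex 0 ≤ τ₁ ≤ ⋯ ≤ τ_k ≤ s of ∏_{i=1}^k (1−ψ̃(τᵢ)) λ̄^k e^{−λ̄ τ_k} dτ for a measurable function ψ̃ : [0,s] → [0,1] and a₀ = 1. Then a_k → 0 as k → ∞, and Σ_{m=1}^∞ [a_{m−1} − a_m − e^{−λ̄ s}·(1/(m−1)!)·(λ̄ ∫₀^s (1−ψ̃(τ))dτ)^{m−1}] = 1 − exp(−∫₀^s λ̄ ψ̃(τ) dτ). -/

import Mathlib

open MeasureTheory intervalIntegral

/-- `a_0 = 1` and, for `k ≥ 1`,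
`a_k = ∫_{0≤τ₁≤⋯≤τ_k≤s} ∏_{i=1}^k (1−ψ̃(τᵢ)) · λ̄^k e^{−λ̄ τ_k} dτ`. -/
noncomputable def aSeq (ψ : ℝ → ℝ) (lam s : ℝ) : ℕ → ℝ
  | 0 => 1
  | k + 1 =>
    ∫ τ in {τ : Fin (k + 1) → ℝ | 0 ≤ τ 0 ∧ Monotone τ ∧ τ (Fin.last k) ≤ s},
      (∏ i : Fin (k + 1), (1 - ψ (τ i))) * lam ^ (k + 1) * Real.exp (-lam * τ (Fin.last k))

namespace ASeqAux

lemma hyperplane_null {n : ℕ} (i j : Fin n) (hij : i ≠ j) :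
    volume {τ : Fin n → ℝ | τ i = τ j} = 0 := by
  set L : (Fin n → ℝ) →ₗ[ℝ] ℝ :=
    (LinearMap.proj i : (Fin n → ℝ) →ₗ[ℝ] ℝ) - (LinearMap.proj j : (Fin n → ℝ) →ₗ[ℝ] ℝ) with hL
  have hset : {τ : Fin n → ℝ | τ i = τ j} = (LinearMap.ker L : Set (Fin n → ℝ)) := by
    ext τ; simp [hL, LinearMap.mem_ker, sub_eq_zero]
  rw [hset]
  refine Measure.addHaar_submodule _ _ ?_
  intro htop
  have h1 : L (Pi.single i (1:ℝ)) = 0 := by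
    have : Pi.single i (1:ℝ) ∈ LinearMap.ker L := by rw [htop]; trivial
    simpa using this
  rw [hL] at h1
  simp [Pi.single_eq_same, Pi.single_eq_of_ne hij.symm] at h1

def cube (n : ℕ) (s : ℝ) : Set (Fin n → ℝ) := Set.pi Set.univ (fun _ => Set.Icc 0 s)

def strictS (n : ℕ) (s : ℝ) : Set (Fin n → ℝ) := {τ | StrictMono τ} ∩ cube n s

lemma measurableSet_cube (n : ℕ) (s : ℝ) : MeasurableSet (cube n s) :=
  MeasurableSet.univ_pi fun _ => measurableSet_Icc

lemma measurableSet_strictS (n : ℕ) (s : ℝ) : MeasurableSet (strictS n s) := by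
  refine MeasurableSet.inter ?_ (measurableSet_cube n s)
  have : {τ : Fin n → ℝ | StrictMono τ} =
      ⋂ (i : Fin n), ⋂ (j : Fin n), ⋂ (_ : i < j), {τ : Fin n → ℝ | τ i < τ j} := by
    ext τ
    simp only [Set.mem_iInter, Set.mem_setOf_eq]
    exact ⟨fun h i j hij => h hij, fun h a b hab => h a b hab⟩
  rw [this]
  exact MeasurableSet.iInter fun i => MeasurableSet.iInter fun j => MeasurableSet.iInter fun _ =>
    measurableSet_lt (measurable_pi_apply i) (measurable_pi_apply j)

lemma comp_measurable {n : ℕ} (σ : Equiv.Perm (Fin n)) :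
    Measurable (fun τ : Fin n → ℝ => τ ∘ σ) :=
  measurable_pi_lambda _ fun i => measurable_pi_apply (σ i)

lemma volume_comp_preimage {n : ℕ} (σ : Equiv.Perm (Fin n)) (s : ℝ) :
    volume ((fun τ : Fin n → ℝ => τ ∘ σ) ⁻¹' strictS n s) = volume (strictS n s) := by
  have h := MeasureTheory.volume_measurePreserving_piCongrLeft (fun _ : Fin n => ℝ) σ.symm
  have hcoe : ⇑(MeasurableEquiv.piCongrLeft (fun _ : Fin n => ℝ) σ.symm)
      = fun τ : Fin n → ℝ => τ ∘ σ := by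
    funext τ
    funext b
    have := Equiv.piCongrLeft_apply_apply (fun _ : Fin n => ℝ) σ.symm τ (σ b)
    simpa [MeasurableEquiv.coe_piCongrLeft] using this
  have := h.measure_preimage (measurableSet_strictS n s).nullMeasurableSet
  rwa [hcoe] at this

lemma factorial_mul_volume_strictS_le (n : ℕ) (s : ℝ) (hs : 0 ≤ s) :
    (Nat.factorial n : ENNReal) * volume (strictS n s) ≤ ENNReal.ofReal s ^ n := by
  set f : Equiv.Perm (Fin n) → Set (Fin n → ℝ) :=
    fun σ => (fun τ : Fin n → ℝ => τ ∘ σ) ⁻¹' strictS n s with hf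
  have hdisj : ((Finset.univ : Finset (Equiv.Perm (Fin n))) : Set (Equiv.Perm (Fin n))).PairwiseDisjoint f := by
    intro σ _ σ' _ hne
    refine Set.disjoint_left.2 fun τ hτ hτ' => hne ?_
    have h1 : StrictMono (τ ∘ σ) := hτ.1
    have h2 : StrictMono (τ ∘ σ') := hτ'.1
    have hr : Set.range (τ ∘ σ) = Set.range (τ ∘ σ') := by
      rw [Set.range_comp, Set.range_comp, σ.surjective.range_eq, σ'.surjective.range_eq]
    have heq : τ ∘ σ = τ ∘ σ' := by
      haveI : WellFoundedLT (Fin n) := inferInstance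
      exact (h1.range_inj h2).1 hr
    have hinj : Function.Injective τ := by
      have h3 : Function.Injective (τ ∘ σ) := h1.injective
      have := h3.comp σ.symm.injective
      simpa [Function.comp_def] using this
    exact Equiv.ext fun i => hinj (congrFun heq i)
  have hmeas : ∀ σ ∈ (Finset.univ : Finset (Equiv.Perm (Fin n))), MeasurableSet (f σ) :=
    fun σ _ => (measurableSet_strictS n s).preimage (comp_measurable σ)
  have hsum := measure_biUnion_finset hdisj hmeas (μ := volume)
  have hsub : (⋃ σ ∈ (Finset.univ : Finset (Equiv.Perm (Fin n))), f σ) ⊆ cube n s := by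
    intro τ hτ
    simp only [Set.mem_iUnion] at hτ
    obtain ⟨σ, _, hτ⟩ := hτ
    intro i _
    have := hτ.2 (σ.symm i) (Set.mem_univ _)
    simpa using this
  have hcube : volume (cube n s) = ENNReal.ofReal s ^ n := by
    rw [cube, volume_pi_pi]
    simp [Real.volume_Icc, hs]
  calc (Nat.factorial n : ENNReal) * volume (strictS n s)
      = ∑ σ : Equiv.Perm (Fin n), volume (f σ) := by
        rw [Finset.sum_congr rfl fun σ _ => volume_comp_preimage σ s]
        simp [Finset.card_univ, Fintype.card_perm, Fintype.card_fin, mul_comm]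
    _ = volume (⋃ σ ∈ (Finset.univ : Finset (Equiv.Perm (Fin n))), f σ) := hsum.symm
    _ ≤ volume (cube n s) := measure_mono hsub
    _ = ENNReal.ofReal s ^ n := hcube

def simS (k : ℕ) (s : ℝ) : Set (Fin (k+1) → ℝ) :=
  {τ | 0 ≤ τ 0 ∧ Monotone τ ∧ τ (Fin.last k) ≤ s}

lemma measurableSet_simS (k : ℕ) (s : ℝ) : MeasurableSet (simS k s) := by
  have : simS k s = ({τ : Fin (k+1) → ℝ | 0 ≤ τ 0} ∩
      (⋂ (i : Fin (k+1)), ⋂ (j : Fin (k+1)), ⋂ (_ : i ≤ j), {τ : Fin (k+1) → ℝ | τ i ≤ τ j})) ∩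
      {τ : Fin (k+1) → ℝ | τ (Fin.last k) ≤ s} := by
    ext τ
    simp only [simS, Set.mem_inter_iff, Set.mem_iInter, Set.mem_setOf_eq]
    exact ⟨fun ⟨h1, h2, h3⟩ => ⟨⟨h1, fun i j hij => h2 hij⟩, h3⟩,
      fun ⟨⟨h1, h2⟩, h3⟩ => ⟨h1, fun i j hij => h2 i j hij, h3⟩⟩
  rw [this]
  refine MeasurableSet.inter (MeasurableSet.inter ?_ ?_) ?_
  · exact measurableSet_le measurable_const (measurable_pi_apply 0)
  · exact MeasurableSet.iInter fun i => MeasurableSet.iInter fun j => MeasurableSet.iInter fun _ =>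
      measurableSet_le (measurable_pi_apply i) (measurable_pi_apply j)
  · exact measurableSet_le (measurable_pi_apply _) measurable_const

lemma simS_mem_Icc {k : ℕ} {s : ℝ} {τ : Fin (k+1) → ℝ} (hτ : τ ∈ simS k s) (i : Fin (k+1)) :
    τ i ∈ Set.Icc (0:ℝ) s :=
  ⟨hτ.1.trans (hτ.2.1 (Fin.zero_le i)), (hτ.2.1 (Fin.le_last i)).trans hτ.2.2⟩

lemma volume_simS_le_strictS (k : ℕ) (s : ℝ) :
    volume (simS k s) ≤ volume (strictS (k+1) s) := by
  set N : Set (Fin (k+1) → ℝ) :=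
    ⋃ (p : Fin (k+1) × Fin (k+1)), ⋃ (_ : p.1 ≠ p.2), {τ : Fin (k+1) → ℝ | τ p.1 = τ p.2} with hN
  have hNnull : volume N = 0 :=
    measure_iUnion_null fun p => measure_iUnion_null fun hp => hyperplane_null p.1 p.2 hp
  have hsub : simS k s ⊆ strictS (k+1) s ∪ N := by
    intro τ hτ
    by_cases hsm : StrictMono τ
    · exact Or.inl ⟨hsm, fun i _ => simS_mem_Icc hτ i⟩
    · right
      simp only [StrictMono, not_forall] at hsm
      obtain ⟨i, j, hij, hlt⟩ := hsm
      have : τ i = τ j := le_antisymm (hτ.2.1 hij.le) (not_lt.1 hlt)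
      exact Set.mem_iUnion.2 ⟨(i, j), Set.mem_iUnion.2 ⟨hij.ne, this⟩⟩
  calc volume (simS k s) ≤ volume (strictS (k+1) s ∪ N) := measure_mono hsub
    _ ≤ volume (strictS (k+1) s) + volume N := measure_union_le _ _
    _ = volume (strictS (k+1) s) := by rw [hNnull, add_zero]

lemma volume_simS_le (k : ℕ) (s : ℝ) (hs : 0 ≤ s) :
    volume (simS k s) ≤ ENNReal.ofReal (s^(k+1) / (Nat.factorial (k+1))) := by
  have h2 := factorial_mul_volume_strictS_le (k+1) s hs
  have hne : ((Nat.factorial (k+1) : ENNReal)) ≠ 0 := by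
    exact Nat.cast_ne_zero.2 (Nat.factorial_ne_zero _)
  have hnt : ((Nat.factorial (k+1) : ENNReal)) ≠ ⊤ := ENNReal.natCast_ne_top _
  have h3 : volume (strictS (k+1) s) ≤ ENNReal.ofReal s ^ (k+1) / (Nat.factorial (k+1)) := by
    rw [ENNReal.le_div_iff_mul_le (Or.inl hne) (Or.inl hnt), mul_comm]
    exact h2
  have h4 : ENNReal.ofReal s ^ (k+1) / ((Nat.factorial (k+1) : ENNReal))
      = ENNReal.ofReal (s^(k+1) / (Nat.factorial (k+1))) := by
    rw [← ENNReal.ofReal_pow hs, ← ENNReal.ofReal_natCast,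
      ENNReal.ofReal_div_of_pos (by exact_mod_cast Nat.factorial_pos _)]
  exact (volume_simS_le_strictS k s).trans (h3.trans_eq h4)

end ASeqAux

namespace ASeqAux

lemma abs_aSeq_succ_le (ψ : ℝ → ℝ) (lam s : ℝ) (hlam : 0 < lam) (hs : 0 < s)
    (hψ01 : ∀ x ∈ Set.Icc (0 : ℝ) s, ψ x ∈ Set.Icc (0 : ℝ) 1) (k : ℕ) :
    |aSeq ψ lam s (k+1)| ≤ lam ^ (k+1) * (s^(k+1) / (Nat.factorial (k+1))) := by
  have hvol := volume_simS_le k s hs.le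
  have hfin : volume (simS k s) < ⊤ := hvol.trans_lt ENNReal.ofReal_lt_top
  have key : ‖∫ τ in simS k s,
      (∏ i : Fin (k + 1), (1 - ψ (τ i))) * lam ^ (k + 1) * Real.exp (-lam * τ (Fin.last k))‖
      ≤ lam ^ (k+1) * (volume (simS k s)).toReal := by
    refine norm_setIntegral_le_of_norm_le_const hfin ?_
    intro τ hτ
    have hmem := fun i => simS_mem_Icc hτ i
    have hprod : (∏ i : Fin (k + 1), (1 - ψ (τ i))) ∈ Set.Icc (0:ℝ) 1 := by
      constructor
      · exact Finset.prod_nonneg fun i _ => by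
          have := (hψ01 _ (hmem i)).2; linarith
      · exact Finset.prod_le_one (fun i _ => by have := (hψ01 _ (hmem i)).2; linarith)
          (fun i _ => by have := (hψ01 _ (hmem i)).1; linarith)
    have hexp : Real.exp (-lam * τ (Fin.last k)) ≤ 1 := by
      have h0 := (hmem (Fin.last k)).1
      exact Real.exp_le_one_iff.2 (by nlinarith)
    have hexp0 : 0 < Real.exp (-lam * τ (Fin.last k)) := Real.exp_pos _
    rw [Real.norm_eq_abs, abs_of_nonneg (mul_nonneg (mul_nonneg hprod.1 (by positivity)) hexp0.le)]
    calc (∏ i : Fin (k + 1), (1 - ψ (τ i))) * lam ^ (k + 1) * Real.exp (-lam * τ (Fin.last k))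
        ≤ 1 * lam ^ (k+1) * 1 := by
          apply mul_le_mul (mul_le_mul_of_nonneg_right hprod.2 (by positivity)) hexp hexp0.le
          positivity
      _ = lam ^ (k+1) := by ring
  have haeq : aSeq ψ lam s (k+1) = ∫ τ in simS k s,
      (∏ i : Fin (k + 1), (1 - ψ (τ i))) * lam ^ (k + 1) * Real.exp (-lam * τ (Fin.last k)) := rfl
  rw [haeq, ← Real.norm_eq_abs]
  refine key.trans ?_
  have htr : (volume (simS k s)).toReal ≤ s^(k+1) / (Nat.factorial (k+1)) :=
    ENNReal.toReal_le_of_le_ofReal (by positivity) hvol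
  exact mul_le_mul_of_nonneg_left htr (by positivity)

end ASeqAux

/-- One has `a_k → 0` as `k → ∞`, and
`Σ_{m=1}^∞ [a_{m−1} − a_m − e^{−λ̄ s}·(1/(m−1)!)·(λ̄ ∫₀^s (1−ψ̃(τ))dτ)^{m−1}]
  = 1 − exp(−∫₀^s λ̄ ψ̃(τ) dτ)`. -/
theorem aSeq_tendsto_zero_and_sum (ψ : ℝ → ℝ) (lam s : ℝ)
    (hlam : 0 < lam) (hs : 0 < s) (hψ : Measurable ψ)
    (hψ01 : ∀ x ∈ Set.Icc (0 : ℝ) s, ψ x ∈ Set.Icc (0 : ℝ) 1) :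
    Filter.Tendsto (aSeq ψ lam s) Filter.atTop (nhds 0) ∧
    HasSum
      (fun m : ℕ => aSeq ψ lam s m - aSeq ψ lam s (m + 1) -
        Real.exp (-lam * s) * (1 / (m.factorial : ℝ)) *
          (lam * ∫ τ in (0 : ℝ)..s, (1 - ψ τ)) ^ m)
      (1 - Real.exp (-∫ τ in (0 : ℝ)..s, lam * ψ τ)) := by
  set a := aSeq ψ lam s with ha
  have hb : ∀ k : ℕ, |a (k+1)| ≤ (lam*s)^(k+1) / (Nat.factorial (k+1)) := by
    intro k
    have h := ASeqAux.abs_aSeq_succ_le ψ lam s hlam hs hψ01 k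
    calc |a (k+1)| ≤ lam ^ (k+1) * (s^(k+1) / (Nat.factorial (k+1))) := h
      _ = (lam*s)^(k+1) / (Nat.factorial (k+1)) := by rw [mul_pow]; ring
  have htend : Filter.Tendsto a Filter.atTop (nhds 0) := by
    apply squeeze_zero_norm' ?_ (FloorSemiring.tendsto_pow_div_factorial_atTop (lam*s))
    filter_upwards [Filter.eventually_ge_atTop 1] with n hn
    obtain ⟨k, rfl⟩ : ∃ k, n = k + 1 := ⟨n - 1, by omega⟩
    simpa [Real.norm_eq_abs] using hb k
  refine ⟨htend, ?_⟩
  have ha0 : a 0 = 1 := rfl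
  have hls : (0:ℝ) ≤ lam * s := by positivity
  -- summability of the telescoping part
  have hbnd : ∀ m : ℕ, ‖a m - a (m+1)‖ ≤ (1 + lam*s) * ((lam*s)^m / (Nat.factorial m)) := by
    intro m
    match m with
    | 0 =>
      have h1 := hb 0
      norm_num at h1
      rw [Real.norm_eq_abs, ha0]
      calc |(1:ℝ) - a 1| ≤ |(1:ℝ)| + |a 1| := abs_sub _ _
        _ ≤ 1 + lam * s := by rw [abs_one]; linarith
        _ = (1 + lam*s) * ((lam*s)^0 / (Nat.factorial 0)) := by simp
    | (k+1) =>
      have h1 := hb k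
      have h2 := hb (k+1)
      have hfpos : (0:ℝ) < (Nat.factorial (k+1) : ℝ) := by exact_mod_cast Nat.factorial_pos _
      have hfle : (Nat.factorial (k+1) : ℝ) ≤ (Nat.factorial (k+2) : ℝ) := by
        exact_mod_cast Nat.factorial_le (by omega)
      have h3 : (lam*s)^(k+2) / (Nat.factorial (k+2))
          ≤ lam*s * ((lam*s)^(k+1) / (Nat.factorial (k+1))) := by
        calc (lam*s)^(k+2) / (Nat.factorial (k+2))
            ≤ (lam*s)^(k+2) / (Nat.factorial (k+1)) :=
              div_le_div_of_nonneg_left (by positivity) hfpos hfle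
          _ = lam*s * ((lam*s)^(k+1) / (Nat.factorial (k+1))) := by rw [pow_succ]; ring
      calc ‖a (k+1) - a (k+2)‖ ≤ |a (k+1)| + |a (k+2)| := abs_sub _ _
        _ ≤ (lam*s)^(k+1) / (Nat.factorial (k+1)) + lam*s * ((lam*s)^(k+1) / (Nat.factorial (k+1))) := by
            have := h2
            linarith
        _ = (1 + lam*s) * ((lam*s)^(k+1) / (Nat.factorial (k+1))) := by ring
  have hsummable : Summable (fun m : ℕ => a m - a (m+1)) := by
    refine Summable.of_norm_bounded ((Real.summable_pow_div_factorial (lam*s)).mul_left (1 + lam*s)) hbnd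
  have hg : HasSum (fun m : ℕ => a m - a (m+1)) 1 := by
    have h1 := hsummable.hasSum
    have h2 := h1.tendsto_sum_nat
    have h3 : (fun n : ℕ => ∑ m ∈ Finset.range n, (a m - a (m+1))) = fun n : ℕ => 1 - a n := by
      funext n
      rw [Finset.sum_range_sub' a n, ha0]
    rw [h3] at h2
    have h4 : Filter.Tendsto (fun n : ℕ => 1 - a n) Filter.atTop (nhds (1 - 0)) :=
      tendsto_const_nhds.sub htend
    have h5 : (∑' m : ℕ, (a m - a (m+1))) = 1 := by
      have := tendsto_nhds_unique h2 h4
      simpa using this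
    rwa [h5] at h1
  -- the exponential part
  set x := lam * ∫ τ in (0:ℝ)..s, (1 - ψ τ) with hx
  have hh : HasSum (fun m : ℕ => Real.exp (-lam*s) * (1/(m.factorial : ℝ)) * x^m)
      (Real.exp (-lam*s) * Real.exp x) := by
    have h1 : HasSum (fun m : ℕ => x^m / (m.factorial : ℝ)) (Real.exp x) := by
      have := NormedSpace.expSeries_div_hasSum_exp (𝔸 := ℝ) x
      rwa [← Real.exp_eq_exp_ℝ] at this
    have h2 := h1.mul_left (Real.exp (-lam*s))
    have h3 : (fun m : ℕ => Real.exp (-lam*s) * (1/(m.factorial : ℝ)) * x^m)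
        = fun m : ℕ => Real.exp (-lam*s) * (x^m / (m.factorial : ℝ)) := by
      funext m; ring
    rwa [h3]
  -- integrability of ψ and identification of the constant
  have hint : IntervalIntegrable ψ volume 0 s := by
    rw [intervalIntegrable_iff_integrableOn_Ioc_of_le hs.le]
    refine Measure.integrableOn_of_bounded (M := 1) measure_Ioc_lt_top.ne hψ.aestronglyMeasurable ?_
    refine (ae_restrict_iff' measurableSet_Ioc).2 (Filter.Eventually.of_forall fun y hy => ?_)
    have h := hψ01 y ⟨hy.1.le, hy.2⟩
    rw [Real.norm_eq_abs, abs_le]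
    exact ⟨by linarith [h.1], h.2⟩
  have hxval : x = lam * (s - ∫ τ in (0:ℝ)..s, ψ τ) := by
    rw [hx]
    congr 1
    rw [integral_sub intervalIntegrable_const hint]
    simp
  have hconst : Real.exp (-lam*s) * Real.exp x = Real.exp (-∫ τ in (0:ℝ)..s, lam * ψ τ) := by
    rw [← Real.exp_add, intervalIntegral.integral_const_mul, hxval]
    congr 1
    ring
  have := hg.sub hh
  rw [hconst] at this
  exact this
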